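/- Lower bound on the restricted eigenvalue via the sup-norm deviation of the empirical Gram matrix (claim in the proof of Theorem 3.2): Let ρ := max_{1≤j,k≤p} |(E_n[x x'] − I)_{jk}| where E_n[x x'] is the p×p matrix with entries (1/n)∑_i x_{ij}x_{ik} and I the identity. Then for every C ≥ 0 with s(1+2C)ρ ≤ 1, the restricted eigenvalue satisfies κ(C) ≥ √(1 − s(1+2C)ρ). -/

import Mathlib

open Finset MeasureTheory ProbabilityTheory

noncomputable section

/-- Prediction norm `‖δ‖_{2,n} = ((1/n) ∑_i (x_i'δ)²)^{1/2}`. -/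
def predNorm (n p : ℕ) (x : Fin n → Fin p → ℝ) (δ : Fin p → ℝ) : ℝ :=
  Real.sqrt ((n : ℝ)⁻¹ * ∑ i, (∑ j, x i j * δ j) ^ 2)

/-- Least-squares criterion `Q̂(β) = (1/n) ∑_i (y_i - x_i'β)²`. -/
def Qls (n p : ℕ) (x : Fin n → Fin p → ℝ) (y : Fin n → ℝ) (β : Fin p → ℝ) : ℝ :=
  (n : ℝ)⁻¹ * ∑ i, (y i - ∑ j, x i j * β j) ^ 2

/-- ℓ1-norm on `ℝ^p`. -/
def l1 {p : ℕ} (v : Fin p → ℝ) : ℝ := ∑ j, |v j|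

/-- sup-norm (max-absolute-coordinate norm) on `ℝ^p`. -/
def supNorm {p : ℕ} (v : Fin p → ℝ) : ℝ := ⨆ j, |v j|

/-- `restr A δ` is `δ` with coordinates outside `A` set to `0`. -/
def restr {p : ℕ} (A : Finset (Fin p)) (δ : Fin p → ℝ) : Fin p → ℝ :=
  fun j => if j ∈ A then δ j else 0

/-- Support of a vector, as a finset. -/
def suppF {p : ℕ} (v : Fin p → ℝ) : Finset (Fin p) :=
  Finset.univ.filter (fun j => v j ≠ 0)

/-- Restricted eigenvalue `κ(c̄)`. -/
def kappaRE (n p : ℕ) (x : Fin n → Fin p → ℝ) (T : Finset (Fin p)) (cbar : ℝ) : ℝ :=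
  sInf {r : ℝ | ∃ δ : Fin p → ℝ, δ ≠ 0 ∧ l1 (restr Tᶜ δ) ≤ cbar * l1 (restr T δ) ∧
    r = Real.sqrt T.card * predNorm n p x δ / l1 (restr T δ)}

/-- Restricted sparse maximal eigenvalue `φ(m)`. -/
def phiRSE (n p : ℕ) (x : Fin n → Fin p → ℝ) (T : Finset (Fin p)) (m : ℕ) : ℝ :=
  sSup {r : ℝ | ∃ δ : Fin p → ℝ, δ ≠ 0 ∧ (suppF (restr Tᶜ δ)).card ≤ m ∧
    r = (predNorm n p x δ) ^ 2 / ∑ j, δ j ^ 2}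

/-- Restricted sparse minimal eigenvalue `κ̃(m)²`. -/
def kappaTildeSq (n p : ℕ) (x : Fin n → Fin p → ℝ) (T : Finset (Fin p)) (m : ℕ) : ℝ :=
  sInf {r : ℝ | ∃ δ : Fin p → ℝ, δ ≠ 0 ∧ (suppF (restr Tᶜ δ)).card ≤ m ∧
    r = (predNorm n p x δ) ^ 2 / ∑ j, δ j ^ 2}

/-- The condition number `μ(m) = √φ(m)/κ̃(m)`. -/
def muCond (n p : ℕ) (x : Fin n → Fin p → ℝ) (T : Finset (Fin p)) (m : ℕ) : ℝ :=
  Real.sqrt (phiRSE n p x T m) / Real.sqrt (kappaTildeSq n p x T m)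


/-- Auxiliary: expanding a product of two linear forms averaged over observations. -/
lemma bilin'' (n p : ℕ) (x : Fin n → Fin p → ℝ) (w z : Fin p → ℝ) :
    (n:ℝ)⁻¹ * ∑ i, (∑ j, x i j * w j) * (∑ k, x i k * z k)
      = ∑ j, ∑ k, w j * z k * ((n:ℝ)⁻¹ * ∑ i, x i j * x i k) := by
  calc (n:ℝ)⁻¹ * ∑ i, (∑ j, x i j * w j) * (∑ k, x i k * z k)
      = ∑ i, ∑ j, ∑ k, (n:ℝ)⁻¹ * ((x i j * w j) * (x i k * z k)) := by
        rw [Finset.mul_sum]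
        refine Finset.sum_congr rfl fun i _ => ?_
        rw [Finset.sum_mul_sum, Finset.mul_sum]
        exact Finset.sum_congr rfl fun j _ => Finset.mul_sum _ _ _
    _ = ∑ j, ∑ i, ∑ k, (n:ℝ)⁻¹ * ((x i j * w j) * (x i k * z k)) := Finset.sum_comm
    _ = ∑ j, ∑ k, ∑ i, (n:ℝ)⁻¹ * ((x i j * w j) * (x i k * z k)) :=
        Finset.sum_congr rfl fun j _ => Finset.sum_comm
    _ = ∑ j, ∑ k, w j * z k * ((n:ℝ)⁻¹ * ∑ i, x i j * x i k) := by
        refine Finset.sum_congr rfl fun j _ => Finset.sum_congr rfl fun k _ => ?_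
        rw [Finset.mul_sum, Finset.mul_sum]
        exact Finset.sum_congr rfl fun i _ => by ring

/-- Auxiliary: lower bound on a bilinear form with sup-norm-bounded coefficients. -/
lemma double_bound'' {p : ℕ} (w z : Fin p → ℝ) (D : Fin p → Fin p → ℝ) (ρ : ℝ)
    (hD : ∀ j k, |D j k| ≤ ρ) :
    -(ρ * l1 w * l1 z) ≤ ∑ j, ∑ k, w j * z k * D j k := by
  have h : ∀ j k : Fin p, -(|w j| * |z k| * ρ) ≤ w j * z k * D j k := by
    intro j k
    refine le_trans ?_ (neg_abs_le _)
    rw [neg_le_neg_iff, abs_mul, abs_mul]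
    exact mul_le_mul_of_nonneg_left (hD j k) (mul_nonneg (abs_nonneg _) (abs_nonneg _))
  have e : ρ * l1 w * l1 z = ∑ j, ∑ k, |w j| * |z k| * ρ := by
    rw [show ρ * l1 w * l1 z = (l1 w * l1 z) * ρ by ring, l1, l1,
      Finset.sum_mul_sum, Finset.sum_mul]
    exact Finset.sum_congr rfl fun j _ => by rw [Finset.sum_mul]
  rw [e, ← Finset.sum_neg_distrib]
  refine Finset.sum_le_sum fun j _ => ?_
  rw [← Finset.sum_neg_distrib]
  exact Finset.sum_le_sum fun k _ => h j k

/-- Auxiliary: splitting diagonal from off-diagonal-style deviation. -/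
lemma split'' {p : ℕ} (w z : Fin p → ℝ) (E : Fin p → Fin p → ℝ) :
    ∑ j, ∑ k, w j * z k * E j k
      = (∑ j, ∑ k, w j * z k * (E j k - if j = k then 1 else 0)) + ∑ j, w j * z j := by
  rw [← Finset.sum_add_distrib]
  refine Finset.sum_congr rfl fun j _ => ?_
  have hz : w j * z j = ∑ k, if j = k then w j * z k else 0 := by
    rw [Finset.sum_ite_eq]; simp
  rw [hz, ← Finset.sum_add_distrib]
  refine Finset.sum_congr rfl fun k _ => ?_
  by_cases h : j = k <;> simp [h] <;> ring

/-- Auxiliary: core quadratic-form lower bound. -/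
lemma core'' (n p : ℕ) (x : Fin n → Fin p → ℝ) (u v : Fin p → ℝ) (ρ : ℝ)
    (hρb : ∀ j k : Fin p,
      |(n:ℝ)⁻¹ * (∑ i, x i j * x i k) - (if j = k then 1 else 0)| ≤ ρ)
    (huv0 : ∀ j, u j * v j = 0) :
    (∑ j, u j * u j) - ρ * l1 u * l1 u - 2 * (ρ * l1 u * l1 v)
      ≤ (n:ℝ)⁻¹ * ∑ i, (∑ j, x i j * (u j + v j))^2 := by
  have key1 : ∀ w z : Fin p → ℝ,
      -(ρ * l1 w * l1 z) + ∑ j, w j * z j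
        ≤ (n:ℝ)⁻¹ * ∑ i, (∑ j, x i j * w j) * (∑ k, x i k * z k) := by
    intro w z
    rw [bilin'' n p x w z, split'' w z (fun j k => (n:ℝ)⁻¹ * ∑ i, x i j * x i k)]
    exact add_le_add_left (double_bound'' w z _ ρ hρb) _
  have hsum : ∀ i, (∑ j, x i j * (u j + v j))
      = (∑ j, x i j * u j) + (∑ j, x i j * v j) := by
    intro i
    rw [← Finset.sum_add_distrib]
    exact Finset.sum_congr rfl fun j _ => mul_add _ _ _
  have hpt : ∀ i : Fin n,
      (∑ j, x i j * u j) * (∑ k, x i k * u k)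
        + 2 * ((∑ j, x i j * u j) * (∑ k, x i k * v k))
        ≤ (∑ j, x i j * (u j + v j))^2 := by
    intro i
    rw [hsum i]
    nlinarith [sq_nonneg (∑ j, x i j * v j)]
  have hmain : (n:ℝ)⁻¹ * ∑ i, ((∑ j, x i j * u j) * (∑ k, x i k * u k)
        + 2 * ((∑ j, x i j * u j) * (∑ k, x i k * v k)))
      ≤ (n:ℝ)⁻¹ * ∑ i, (∑ j, x i j * (u j + v j))^2 :=
    mul_le_mul_of_nonneg_left (Finset.sum_le_sum fun i _ => hpt i)
      (inv_nonneg.mpr n.cast_nonneg)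
  have e : (n:ℝ)⁻¹ * ∑ i, ((∑ j, x i j * u j) * (∑ k, x i k * u k)
        + 2 * ((∑ j, x i j * u j) * (∑ k, x i k * v k)))
      = (n:ℝ)⁻¹ * (∑ i, (∑ j, x i j * u j) * (∑ k, x i k * u k))
        + 2 * ((n:ℝ)⁻¹ * ∑ i, (∑ j, x i j * u j) * (∑ k, x i k * v k)) := by
    rw [Finset.sum_add_distrib, ← Finset.mul_sum]
    ring
  have huv0' : (∑ j, u j * v j) = 0 := Finset.sum_eq_zero fun j _ => huv0 j
  have h1 := key1 u u
  have h2 := key1 u v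
  rw [huv0'] at h2
  rw [e] at hmain
  linarith

/-- claim in the proof of Theorem 3.2: lower bound on the restricted
eigenvalue via the sup-norm deviation of the empirical Gram matrix from the identity. -/
theorem restricted_eigenvalue_lower_bound_gram_deviation
    (n p : ℕ) (hn : 0 < n) (hp : 0 < p)
    (x : Fin n → Fin p → ℝ)
    (hx : ∀ j, (n : ℝ)⁻¹ * ∑ i, x i j ^ 2 = 1)
    (T : Finset (Fin p)) (s : ℕ) (hs : s = T.card) (hs1 : 1 ≤ s)
    (ρ : ℝ)
    (hρ : ρ = ⨆ j : Fin p, ⨆ k : Fin p,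
      |(n : ℝ)⁻¹ * (∑ i, x i j * x i k) - (if j = k then 1 else 0)|)
    (C : ℝ) (hC : 0 ≤ C) (hsmall : (s : ℝ) * (1 + 2 * C) * ρ ≤ 1) :
    Real.sqrt (1 - s * (1 + 2 * C) * ρ) ≤ kappaRE n p x T C := by
  subst hs
  haveI : Nonempty (Fin p) := ⟨⟨0, hp⟩⟩
  have hρb : ∀ j k : Fin p,
      |(n:ℝ)⁻¹ * (∑ i, x i j * x i k) - (if j = k then 1 else 0)| ≤ ρ := by
    intro j k
    rw [hρ]
    refine le_trans (le_ciSup (f := fun k : Fin p =>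
      |(n:ℝ)⁻¹ * (∑ i, x i j * x i k) - (if j = k then 1 else 0)|)
      (Set.Finite.bddAbove (Set.finite_range _)) k) ?_
    exact le_ciSup (f := fun j : Fin p => ⨆ k : Fin p,
      |(n:ℝ)⁻¹ * (∑ i, x i j * x i k) - (if j = k then 1 else 0)|)
      (Set.Finite.bddAbove (Set.finite_range _)) j
  have hρ0 : 0 ≤ ρ := le_trans (abs_nonneg _) (hρb ⟨0, hp⟩ ⟨0, hp⟩)
  have l1nn : ∀ w : Fin p → ℝ, 0 ≤ l1 w := fun w =>
    Finset.sum_nonneg fun j _ => abs_nonneg _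
  rw [kappaRE]
  apply le_csInf
  · -- nonemptiness of the constraint set
    obtain ⟨j₀, hj₀⟩ : T.Nonempty := Finset.card_pos.mp (by omega)
    refine ⟨_, fun j => if j = j₀ then (1:ℝ) else 0, ?_, ?_, rfl⟩
    · intro h
      have := congrFun h j₀
      simp at this
    · have h1 : l1 (restr Tᶜ (fun j => if j = j₀ then (1:ℝ) else 0)) = 0 := by
        rw [l1]
        apply Finset.sum_eq_zero
        intro j _
        rw [restr]
        by_cases hj : j ∈ Tᶜ
        · have : j ≠ j₀ := fun h => (Finset.mem_compl.mp hj) (h ▸ hj₀)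
          simp [hj, this]
        · simp [hj]
      rw [h1]
      exact mul_nonneg hC (l1nn _)
  · rintro r ⟨δ, hδ0, hcons, rfl⟩
    set u : Fin p → ℝ := restr T δ with hu
    set v : Fin p → ℝ := restr Tᶜ δ with hv
    set L : ℝ := l1 u with hLdef
    set M : ℝ := l1 v with hMdef
    have hLnn : 0 ≤ L := l1nn u
    have hMnn : 0 ≤ M := l1nn v
    have hLpos : 0 < L := by
      rcases eq_or_lt_of_le hLnn with h | h
      · exfalso
        have hM0 : M = 0 := le_antisymm (by
          calc M ≤ C * L := hcons
          _ = 0 := by rw [← h, mul_zero]) hMnn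
        have hu0 : ∀ j ∈ Finset.univ, |u j| = 0 :=
          (Finset.sum_eq_zero_iff_of_nonneg fun j _ => abs_nonneg _).mp h.symm
        have hv0 : ∀ j ∈ Finset.univ, |v j| = 0 :=
          (Finset.sum_eq_zero_iff_of_nonneg fun j _ => abs_nonneg _).mp hM0
        apply hδ0
        funext j
        by_cases hj : j ∈ T
        · have := abs_eq_zero.mp (hu0 j (Finset.mem_univ j))
          rwa [hu, restr, if_pos hj] at this
        · have := abs_eq_zero.mp (hv0 j (Finset.mem_univ j))
          rwa [hv, restr, if_pos (Finset.mem_compl.mpr hj)] at this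
      · exact h
    have huv0 : ∀ j, u j * v j = 0 := by
      intro j
      by_cases hj : j ∈ T
      · rw [hv, restr, if_neg (by simp [hj]), mul_zero]
      · rw [hu, restr, if_neg hj, zero_mul]
    have hcore := core'' n p x u v ρ hρb huv0
    set Q : ℝ := (n:ℝ)⁻¹ * ∑ i, (∑ j, x i j * δ j)^2 with hQdef
    have hQnn : 0 ≤ Q := by
      rw [hQdef]
      exact mul_nonneg (inv_nonneg.mpr n.cast_nonneg)
        (Finset.sum_nonneg fun i _ => sq_nonneg _)
    have hQeq : (n:ℝ)⁻¹ * ∑ i, (∑ j, x i j * (u j + v j))^2 = Q := by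
      rw [hQdef]
      congr 1
      refine Finset.sum_congr rfl fun i _ => ?_
      congr 1
      refine Finset.sum_congr rfl fun j _ => ?_
      rw [hu, hv, restr, restr]
      by_cases hj : j ∈ T
      · simp [hj]
      · simp [hj]
    rw [hQeq] at hcore
    have hL_T : L = ∑ j ∈ T, |δ j| := by
      rw [hLdef, l1, hu]
      rw [show (∑ j, |restr T δ j|) = ∑ j, if j ∈ T then |δ j| else 0 from
        Finset.sum_congr rfl fun j _ => by rw [restr]; split <;> simp]
      rw [Finset.sum_ite_mem, Finset.univ_inter]
    have huu_T : (∑ j, u j * u j) = ∑ j ∈ T, |δ j| ^ 2 := by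
      rw [show (∑ j, u j * u j) = ∑ j, if j ∈ T then |δ j|^2 else 0 from
        Finset.sum_congr rfl fun j _ => by
          rw [hu, restr]; split <;> simp [sq_abs, sq]]
      rw [Finset.sum_ite_mem, Finset.univ_inter]
    have hCS : L ^ 2 ≤ (T.card : ℝ) * ∑ j, u j * u j := by
      rw [hL_T, huu_T]
      exact_mod_cast sq_sum_le_card_mul_sum_sq (s := T) (f := fun j => |δ j|)
    have hcard1 : (1:ℝ) ≤ (T.card : ℝ) := by exact_mod_cast hs1
    have key : (1 - (T.card : ℝ) * (1 + 2 * C) * ρ) * L ^ 2 ≤ (T.card : ℝ) * Q := by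
      have hcard0 : (0:ℝ) ≤ (T.card : ℝ) := by linarith
      have h1 : (T.card : ℝ) * ((∑ j, u j * u j) - ρ * L * L - 2 * (ρ * L * M))
          ≤ (T.card : ℝ) * Q := mul_le_mul_of_nonneg_left hcore hcard0
      have h2 : 0 ≤ (T.card : ℝ) * ρ * L * (C * L - M) :=
        mul_nonneg (mul_nonneg (mul_nonneg hcard0 hρ0) hLnn) (by linarith)
      nlinarith [hCS, h1, h2]
    have hQsqrt : predNorm n p x δ = Real.sqrt Q := by rw [predNorm, hQdef]
    rw [hQsqrt, le_div_iff₀ hLpos]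
    have hc : 0 ≤ 1 - (T.card : ℝ) * (1 + 2 * C) * ρ := by linarith
    calc Real.sqrt (1 - (T.card : ℝ) * (1 + 2 * C) * ρ) * L
        = Real.sqrt ((1 - (T.card : ℝ) * (1 + 2 * C) * ρ) * L ^ 2) := by
          rw [Real.sqrt_mul hc, Real.sqrt_sq hLnn]
      _ ≤ Real.sqrt ((T.card : ℝ) * Q) := Real.sqrt_le_sqrt key
      _ = Real.sqrt (T.card : ℝ) * Real.sqrt Q := Real.sqrt_mul (by positivity) _
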